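/- No density matrix supported on the antisymmetric subspace of (ℂ^d)^⊗N (N ≥ 2) is separable with respect to any bipartition of the parties; in particular no such state is fully separable. -/

import Mathlib

open Matrix
open scoped ComplexOrder

/-- Permutation operator `P_σ` on `(ℂ^d)^⊗N`, acting on coefficient functions by
`(P_σ v) f = v (f ∘ σ)`. -/
noncomputable def permOp (N d : ℕ) (σ : Equiv.Perm (Fin N)) :
    Matrix (Fin N → Fin d) (Fin N → Fin d) ℂ :=
  fun f g => if g = f ∘ σ then 1 else 0

/-- Antisymmetrizer: projector onto the antisymmetric subspace of `(ℂ^d)^⊗N`. -/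
noncomputable def antisymProj (N d : ℕ) : Matrix (Fin N → Fin d) (Fin N → Fin d) ℂ :=
  (1 / (Nat.factorial N) : ℂ) •
    ∑ σ : Equiv.Perm (Fin N), (((Equiv.Perm.sign σ : ℤ) : ℂ)) • permOp N d σ

lemma permOp_mul (N d : ℕ) (σ τ : Equiv.Perm (Fin N)) :
    permOp N d σ * permOp N d τ = permOp N d (σ * τ) := by
  ext f g
  simp only [permOp, Matrix.mul_apply, ite_mul, one_mul, zero_mul]
  rw [Finset.sum_ite_eq' Finset.univ (f ∘ ⇑σ) (fun h => if g = h ∘ ⇑τ then 1 else 0)]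
  simp [Function.comp_assoc]
  rfl

lemma mul_permOp_apply (N d : ℕ) (M : Matrix (Fin N → Fin d) (Fin N → Fin d) ℂ)
    (σ : Equiv.Perm (Fin N)) (f g : Fin N → Fin d) :
    (M * permOp N d σ) f g = M f (g ∘ ⇑σ⁻¹) := by
  simp only [permOp, Matrix.mul_apply, mul_ite, mul_one, mul_zero]
  have : ∀ h : Fin N → Fin d, (g = h ∘ ⇑σ) ↔ (h = g ∘ ⇑σ⁻¹) := by
    intro h
    constructor
    · rintro rfl; funext x; simp
    · rintro rfl; funext x; simp
  simp_rw [this]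
  rw [Finset.sum_ite_eq' Finset.univ (g ∘ ⇑σ⁻¹) (fun _ => M f _)]
  simp

lemma antisymProj_mul_swap (N d : ℕ) (i j : Fin N) (hij : i ≠ j) :
    antisymProj N d * permOp N d (Equiv.swap i j) = - antisymProj N d := by
  set t := Equiv.swap i j with ht
  unfold antisymProj
  rw [Matrix.smul_mul, Finset.sum_mul]
  simp_rw [Matrix.smul_mul, permOp_mul]
  rw [← smul_neg, ← Finset.sum_neg_distrib]
  congr 1
  refine Fintype.sum_equiv (Equiv.mulRight t) _ _ ?_
  intro σ
  simp only [Equiv.coe_mulRight]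
  rw [← neg_smul]
  congr 1
  have hs : Equiv.Perm.sign (σ * t) = - Equiv.Perm.sign σ := by
    rw [Equiv.Perm.sign_mul, Equiv.Perm.sign_swap hij, mul_neg_one]
  rw [hs]
  push_cast
  ring

lemma sum_update_eq (N d : ℕ) (F : (Fin N → Fin d) → ℂ) (j : Fin N) :
    ∑ g : Fin N → Fin d, ∑ y : Fin d, F (Function.update g j y) = (d:ℂ) * ∑ g, F g := by
  have hinv : Function.Involutive
      (fun p : (Fin N → Fin d) × Fin d => (Function.update p.1 j p.2, p.1 j)) := by
    rintro ⟨g, y⟩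
    simp [Function.update_idem]
  calc ∑ g : Fin N → Fin d, ∑ y : Fin d, F (Function.update g j y)
      = ∑ p : (Fin N → Fin d) × Fin d, F (Function.update p.1 j p.2) := by
        rw [Fintype.sum_prod_type]
    _ = ∑ p : (Fin N → Fin d) × Fin d, F p.1 := by
        refine Fintype.sum_equiv hinv.toPerm _ _ ?_
        rintro ⟨g, y⟩
        rfl
    _ = (d:ℂ) * ∑ g, F g := by
        rw [Fintype.sum_prod_type]
        simp [Finset.sum_const, Finset.mul_sum]

lemma comp_swap_eq (N d : ℕ) (f : Fin N → Fin d) (i j : Fin N) (hij : i ≠ j) :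
    f ∘ ⇑(Equiv.swap i j) =
      Function.update (Function.update f i (f j)) j (f i) := by
  funext x
  rcases eq_or_ne x i with rfl | hxi
  · simp [Equiv.swap_apply_left, Function.update_of_ne hij, Function.update_self]
  · rcases eq_or_ne x j with rfl | hxj
    · simp [Equiv.swap_apply_right, Function.update_self]
    · simp [Equiv.swap_apply_of_ne_of_ne hxi hxj,
        Function.update_of_ne hxj, Function.update_of_ne hxi]

lemma key_nonneg (N d : ℕ) (i j : Fin N) (hij : i ≠ j)
    (h : (Fin N → Fin d) → ℂ)
    (hj : ∀ f y, h (Function.update f j y) = h f) :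
    0 ≤ (d:ℂ)^2 * ∑ f, h f * (starRingEnd ℂ) (h (f ∘ ⇑(Equiv.swap i j))) := by
  set c := starRingEnd ℂ
  have hswap : ∀ f : Fin N → Fin d,
      h (f ∘ ⇑(Equiv.swap i j)) = h (Function.update f i (f j)) := by
    intro f
    rw [comp_swap_eq N d f i j hij, hj]
  set H : (Fin N → Fin d) → ℂ := fun g => ∑ x : Fin d, h (Function.update g i x) with hH
  have hHupd : ∀ g x, H (Function.update g i x) = H g := by
    intro g x
    simp [hH, Function.update_idem]
  have step1 : (d:ℂ) * ∑ f, h f * c (h (f ∘ ⇑(Equiv.swap i j)))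
      = ∑ g, h g * c (H g) := by
    rw [← sum_update_eq N d (fun f => h f * c (h (f ∘ ⇑(Equiv.swap i j)))) j]
    refine Finset.sum_congr rfl fun g _ => ?_
    have : ∀ y : Fin d, h (Function.update g j y) *
        c (h (Function.update g j y ∘ ⇑(Equiv.swap i j)))
        = h g * c (h (Function.update g i y)) := by
      intro y
      rw [hswap, hj, Function.update_self,
        Function.update_comm hij.symm, hj]
    simp_rw [this]
    rw [← Finset.mul_sum, ← map_sum]
  have step2 : (d:ℂ) * ∑ g, h g * c (H g) = ∑ g, H g * c (H g) := by
    rw [← sum_update_eq N d (fun g => h g * c (H g)) i]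
    refine Finset.sum_congr rfl fun g _ => ?_
    simp_rw [hHupd]
    rw [← Finset.sum_mul]
  have key : (d:ℂ)^2 * ∑ f, h f * c (h (f ∘ ⇑(Equiv.swap i j)))
      = ∑ g, H g * c (H g) := by
    rw [sq, mul_assoc, step1, step2]
  rw [key]
  refine Finset.sum_nonneg fun g _ => ?_
  rw [Complex.mul_conj]
  exact_mod_cast Complex.zero_le_real.mpr (Complex.normSq_nonneg _)

/-- No density matrix supported on the antisymmetric subspace of `(ℂ^d)^⊗N` (`N ≥ 2`)
is separable with respect to any nontrivial bipartition `S | Sᶜ` of the parties. -/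
theorem antisymmetric_state_not_separable (N d : ℕ) (hN : 2 ≤ N)
    (ρ : Matrix (Fin N → Fin d) (Fin N → Fin d) ℂ)
    (hρ : ρ.PosSemidef) (htr : ρ.trace = 1)
    (hsupp : antisymProj N d * ρ * antisymProj N d = ρ) :
    ∀ S : Finset (Fin N), S.Nonempty → Sᶜ.Nonempty →
      ¬ ∃ (K : ℕ) (w : Fin K → ℝ)
          (σs : Fin K → Matrix ({i // i ∈ S} → Fin d) ({i // i ∈ S} → Fin d) ℂ)
          (τs : Fin K → Matrix ({i // i ∉ S} → Fin d) ({i // i ∉ S} → Fin d) ℂ),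
          (∀ k, 0 ≤ w k) ∧ ∑ k, w k = 1 ∧
          (∀ k, (σs k).PosSemidef ∧ (σs k).trace = 1) ∧
          (∀ k, (τs k).PosSemidef ∧ (τs k).trace = 1) ∧
          ∀ f g, ρ f g = ∑ k, (w k : ℂ) *
            σs k (fun i => f i.1) (fun i => g i.1) *
            τs k (fun i => f i.1) (fun i => g i.1) := by
  intro S hS hSc
  rintro ⟨K, w, σs, τs, hw, hw1, hσ, hτ, hdec⟩
  rcases Nat.eq_zero_or_pos d with rfl | hd
  · haveI : IsEmpty (Fin N → Fin 0) := ⟨fun f => (f ⟨0, by omega⟩).elim0⟩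
    rw [Matrix.trace] at htr
    simp at htr
  obtain ⟨i, hiS⟩ := hS
  obtain ⟨j, hjc⟩ := hSc
  have hjS : j ∉ S := Finset.mem_compl.mp hjc
  have hij : i ≠ j := by rintro rfl; exact hjS hiS
  set t := Equiv.swap i j with htdef
  have htt : ∀ f : Fin N → Fin d, (f ∘ ⇑t) ∘ ⇑t = f := by
    intro f; funext x; simp [htdef, Equiv.swap_apply_self]
  -- antisymmetry of ρ under the swap t
  have hρt : ρ * permOp N d t = -ρ := by
    conv_lhs => rw [← hsupp]
    rw [mul_assoc, antisymProj_mul_swap N d i j hij, mul_neg, hsupp]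
  have hdiag : ∀ f : Fin N → Fin d, ρ f (f ∘ ⇑t) = - ρ f f := by
    intro f
    have h1 : (ρ * permOp N d t) f (f ∘ ⇑t) = (-ρ) f (f ∘ ⇑t) := by rw [hρt]
    rw [mul_permOp_apply] at h1
    have h2 : (f ∘ ⇑t) ∘ ⇑t⁻¹ = f := by
      funext x; simp [htdef]
    rw [h2] at h1
    have h3 : (-ρ) f (f ∘ ⇑t) = - ρ f (f ∘ ⇑t) := rfl
    rw [h3] at h1
    linear_combination h1
  have hE : ∑ f : Fin N → Fin d, ρ f (f ∘ ⇑t) = -1 := by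
    simp_rw [hdiag]
    rw [Finset.sum_neg_distrib]
    have : ∑ f : Fin N → Fin d, ρ f f = 1 := by
      simpa [Matrix.trace, Matrix.diag] using htr
    rw [this]
  -- per-k positivity
  have hne : ∀ l : Fin N, l ∉ S → t l ≠ j := by
    intro l hl
    rcases eq_or_ne l j with rfl | hlj
    · rw [htdef, Equiv.swap_apply_right]; exact hij
    · have hli : l ≠ i := by rintro rfl; exact hl hiS
      rw [htdef, Equiv.swap_apply_of_ne_of_ne hli hlj]; exact hlj
  have key : ∀ k : Fin K, 0 ≤ (d:ℂ)^2 *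
      ∑ f : Fin N → Fin d,
        σs k (fun i' => f i'.1) (fun i' => (f ∘ ⇑t) i'.1) *
        τs k (fun i' => f i'.1) (fun i' => (f ∘ ⇑t) i'.1) := by
    intro k
    obtain ⟨C, hC⟩ : ∃ C, σs k = Cᴴ * C := by
      open scoped MatrixOrder in exact CStarAlgebra.nonneg_iff_eq_star_mul_self.mp (hσ k).1.nonneg
    obtain ⟨D, hD⟩ : ∃ C, τs k = Cᴴ * C := by
      open scoped MatrixOrder in exact CStarAlgebra.nonneg_iff_eq_star_mul_self.mp (hτ k).1.nonneg
    have perf : ∀ f : Fin N → Fin d,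
        σs k (fun i' => f i'.1) (fun i' => (f ∘ ⇑t) i'.1) *
        τs k (fun i' => f i'.1) (fun i' => (f ∘ ⇑t) i'.1)
      = ∑ r, ∑ s,
          ((starRingEnd ℂ) (C r (fun i' => f i'.1)) * D s (fun i' => (f ∘ ⇑t) i'.1)) *
          (starRingEnd ℂ) ((starRingEnd ℂ) (C r (fun i' => (f ∘ ⇑t) i'.1)) *
            D s (fun i' => ((f ∘ ⇑t) ∘ ⇑t) i'.1)) := by
      intro f
      rw [hC, hD]
      simp only [Matrix.mul_apply, Matrix.conjTranspose_apply, Complex.star_def]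
      rw [Finset.sum_mul_sum]
      refine Finset.sum_congr rfl fun r _ => Finset.sum_congr rfl fun s _ => ?_
      rw [htt f]
      simp only [_root_.map_mul, Complex.conj_conj]
      ring
    have expand : ∑ f : Fin N → Fin d,
        σs k (fun i' => f i'.1) (fun i' => (f ∘ ⇑t) i'.1) *
        τs k (fun i' => f i'.1) (fun i' => (f ∘ ⇑t) i'.1)
      = ∑ r, ∑ s, ∑ f : Fin N → Fin d,
          ((starRingEnd ℂ) (C r (fun i' => f i'.1)) * D s (fun i' => (f ∘ ⇑t) i'.1)) *
          (starRingEnd ℂ) ((starRingEnd ℂ) (C r (fun i' => (f ∘ ⇑t) i'.1)) *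
            D s (fun i' => ((f ∘ ⇑t) ∘ ⇑t) i'.1)) := by
      rw [Finset.sum_congr rfl fun f _ => perf f, Finset.sum_comm]
      exact Finset.sum_congr rfl fun r _ => Finset.sum_comm
    rw [expand, Finset.mul_sum]
    refine Finset.sum_nonneg fun r _ => ?_
    rw [Finset.mul_sum]
    refine Finset.sum_nonneg fun s _ => ?_
    refine key_nonneg N d i j hij
      (fun f => (starRingEnd ℂ) (C r (fun i' => f i'.1)) * D s (fun i' => (f ∘ ⇑t) i'.1))
      ?_
    intro f y
    have h1 : (fun i' : {x // x ∈ S} => Function.update f j y i'.1)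
        = (fun i' : {x // x ∈ S} => f i'.1) := by
      funext i'
      refine Function.update_of_ne ?_ _ _
      intro h
      exact hjS (h ▸ i'.2)
    have h2 : (fun i' : {x // x ∉ S} => (Function.update f j y ∘ ⇑t) i'.1)
        = (fun i' : {x // x ∉ S} => (f ∘ ⇑t) i'.1) := by
      funext i'
      exact Function.update_of_ne (hne i'.1 i'.2) _ _
    simp only [h1, h2]
  -- separability expansion
  have hsep : ∑ f : Fin N → Fin d, ρ f (f ∘ ⇑t)
      = ∑ k, (w k : ℂ) * ∑ f : Fin N → Fin d,
          σs k (fun i' => f i'.1) (fun i' => (f ∘ ⇑t) i'.1) *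
          τs k (fun i' => f i'.1) (fun i' => (f ∘ ⇑t) i'.1) := by
    simp_rw [hdec, Finset.mul_sum]
    rw [Finset.sum_comm]
    refine Finset.sum_congr rfl fun k _ => Finset.sum_congr rfl fun f _ => ?_
    ring
  have hnonneg : (0:ℂ) ≤ (d:ℂ)^2 * ∑ f : Fin N → Fin d, ρ f (f ∘ ⇑t) := by
    rw [hsep, Finset.mul_sum]
    refine Finset.sum_nonneg fun k _ => ?_
    rw [mul_left_comm]
    exact mul_nonneg (by exact_mod_cast Complex.zero_le_real.mpr (hw k)) (key k)
  rw [hE, mul_neg_one] at hnonneg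
  have hpos : (0:ℂ) < (d:ℂ)^2 := by positivity
  exact absurd (lt_of_lt_of_le hpos (neg_nonneg.mp hnonneg)) (lt_irrefl 0)
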